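/- Let Θ ∈ L^∞_loc(ℝ) such that Θ(t+0) and Θ(t-0) exist for all t, and let j(t) = ∫₀^t Θ(s) ds. Then the Clarke subdifferential of j at t equals the interval [Θ̲(t), Θ̄(t)], where Θ̲(t) = lim_{μ→0⁺} essinf_{|t-s|≤μ} Θ(s) and Θ̄(t) = lim_{μ→0⁺} esssup_{|t-s|≤μ} Θ(s). -/

import Mathlib

open MeasureTheory Set Filter

/-- The Clarke generalized directional derivative of `j` at `t` in direction `d`. -/
noncomputable def clarkeDeriv (j : ℝ → ℝ) (t d : ℝ) : ℝ :=
  Filter.limsup (fun p : ℝ × ℝ => (j (p.1 + p.2 * d) - j p.1) / p.2)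
    ((nhds t) ×ˢ (nhdsWithin 0 (Set.Ioi 0)))

/-- The Clarke subdifferential of `j : ℝ → ℝ` at `t`. -/
def clarkeSubdiff (j : ℝ → ℝ) (t : ℝ) : Set ℝ :=
  {ξ : ℝ | ∀ d : ℝ, ξ * d ≤ clarkeDeriv j t d}


section Aux
variable {Θ g : ℝ → ℝ}

lemma aux_g_bound (hg : ∀ t, Tendsto Θ (nhdsWithin t (Set.Ioi t)) (nhds (g t)))
    {a b c ε : ℝ} (h : ∀ u ∈ Ioo a b, |Θ u - c| ≤ ε) :
    ∀ s ∈ Ioo a b, |g s - c| ≤ ε := by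
  intro s hs
  have h1 : Tendsto (fun u => |Θ u - c|) (nhdsWithin s (Set.Ioi s)) (nhds (|g s - c|)) :=
    ((hg s).sub tendsto_const_nhds).abs
  refine le_of_tendsto h1 ?_
  filter_upwards [Ioo_mem_nhdsGT_of_mem ⟨le_refl s, hs.2⟩] with u hu
  exact h u ⟨lt_trans hs.1 hu.1, hu.2⟩

lemma aux_rc (hg : ∀ t, Tendsto Θ (nhdsWithin t (Set.Ioi t)) (nhds (g t))) (t : ℝ) :
    Tendsto g (nhdsWithin t (Set.Ici t)) (nhds (g t)) := by
  rw [Metric.tendsto_nhdsWithin_nhds]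
  intro ε hε
  obtain ⟨δ, hδ, hδ2⟩ := Metric.tendsto_nhdsWithin_nhds.1 (hg t) (ε/2) (by linarith)
  refine ⟨δ, hδ, fun {s} hs hd => ?_⟩
  rcases eq_or_lt_of_le (Set.mem_Ici.1 hs) with rfl | hlt
  · simpa using hε
  · have hb : ∀ u ∈ Ioo t (t + δ), |Θ u - g t| ≤ ε/2 := by
      intro u hu
      have := hδ2 (hu.1 : u ∈ Set.Ioi t) (by rw [Real.dist_eq, abs_of_pos (by linarith [hu.1])]; linarith [hu.2])
      rw [Real.dist_eq] at this; linarith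
    have hsin : s ∈ Ioo t (t + δ) := by
      rw [Real.dist_eq, abs_of_pos (by linarith)] at hd
      exact ⟨hlt, by linarith⟩
    have := aux_g_bound hg hb s hsin
    rw [Real.dist_eq]; linarith

lemma aux_g_meas (hg : ∀ t, Tendsto Θ (nhdsWithin t (Set.Ioi t)) (nhds (g t))) :
    Measurable g := by
  have key : ∀ x : ℝ, Tendsto (fun n : ℕ => g ((⌊x * 2^n⌋ + 1 : ℤ) / 2^n)) atTop (nhds (g x)) := by
    intro x
    set u : ℕ → ℝ := fun n => (⌊x * 2^n⌋ + 1 : ℤ) / 2^n with hu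
    have hgt : ∀ n, x < u n := by
      intro n
      have h1 := Int.lt_floor_add_one (x * 2^n)
      have h2 : (0:ℝ) < 2^n := by positivity
      rw [hu]; push_cast; rw [lt_div_iff₀ h2]; linarith
    have hle : ∀ n, u n ≤ x + (1/2)^n := by
      intro n
      have h1 : ((⌊x * 2^n⌋ : ℤ) : ℝ) ≤ x * 2^n := Int.floor_le _
      have h2 : (0:ℝ) < 2^n := by positivity
      rw [hu]; push_cast; rw [div_le_iff₀ h2]
      have h3 : ((1:ℝ)/2)^n * 2^n = 1 := by
        rw [one_div, inv_pow]; exact inv_mul_cancel₀ (by positivity)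
      nlinarith
    have hux : Tendsto u atTop (nhds x) := by
      have h0 : Tendsto (fun n : ℕ => x + (1/2:ℝ)^n) atTop (nhds x) := by
        have := tendsto_pow_atTop_nhds_zero_of_lt_one (by norm_num : (0:ℝ) ≤ 1/2) (by norm_num)
        simpa using tendsto_const_nhds.add this
      exact tendsto_of_tendsto_of_tendsto_of_le_of_le tendsto_const_nhds h0
        (fun n => (hgt n).le) hle
    have huI : Tendsto u atTop (nhdsWithin x (Set.Ici x)) :=
      tendsto_nhdsWithin_of_tendsto_nhds_of_eventually_within u hux
        (Eventually.of_forall fun n => (hgt n).le)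
    exact (aux_rc hg x).comp huI
  refine measurable_of_tendsto_metrizable (f := fun n x => g ((⌊x * 2^n⌋ + 1 : ℤ) / 2^n)) ?_ ?_
  · intro n
    have h1 : Measurable fun x : ℝ => ⌊x * 2^n⌋ := (measurable_id.mul_const _).floor
    exact (measurable_of_countable (fun k : ℤ => g ((k + 1 : ℤ) / 2^n))).comp h1
  · exact tendsto_pi_nhds.2 key

end Aux

section Aux2
variable {Θ g : ℝ → ℝ}

-- right separation for the set where |Θ - g| ≥ ε, given the bound lemma
lemma aux_sep (hg : ∀ t, Tendsto Θ (nhdsWithin t (Set.Ioi t)) (nhds (g t)))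
    {ε : ℝ} (hε : 0 < ε) (x : ℝ) :
    ∃ δ > 0, ∀ s ∈ Ioo x (x + δ), |Θ s - g s| < ε := by
  obtain ⟨δ, hδ, hδ2⟩ := Metric.tendsto_nhdsWithin_nhds.1 (hg x) (ε/3) (by linarith)
  refine ⟨δ, hδ, fun s hs => ?_⟩
  have hb : ∀ u ∈ Ioo x (x + δ), |Θ u - g x| ≤ ε/3 := by
    intro u hu
    have := hδ2 (hu.1 : u ∈ Set.Ioi x)
      (by rw [Real.dist_eq, abs_of_pos (by linarith [hu.1])]; linarith [hu.2])
    rw [Real.dist_eq] at this; linarith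
  have h1 := hb s hs
  have h2 := aux_g_bound hg hb s hs
  calc |Θ s - g s| ≤ |Θ s - g x| + |g x - g s| := abs_sub_le _ _ _
    _ ≤ ε/3 + ε/3 := by rw [abs_sub_comm (g x)]; linarith
    _ < ε := by linarith

lemma aux_countable (hg : ∀ t, Tendsto Θ (nhdsWithin t (Set.Ioi t)) (nhds (g t))) :
    Set.Countable {x : ℝ | Θ x ≠ g x} := by
  have main : ∀ ε : ℝ, 0 < ε → Set.Countable {x : ℝ | ε ≤ |Θ x - g x|} := by
    intro ε hε
    set S := {x : ℝ | ε ≤ |Θ x - g x|} with hS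
    choose δ hδpos hδ using fun x => aux_sep hg hε x
    have hq : ∀ x : ℝ, ∃ q : ℚ, x < (q:ℝ) ∧ (q:ℝ) < x + δ x := by
      intro x
      exact exists_rat_btwn (by linarith [hδpos x])
    choose q hq1 hq2 using hq
    refine MapsTo.countable_of_injOn (f := q) (t := (Set.univ : Set ℚ))
      (fun x _ => trivial) ?_ countable_univ
    intro x hx y hy hxy
    by_contra hne
    rcases lt_or_gt_of_ne hne with h | h
    · have : y ∈ Ioo x (x + δ x) := ⟨h, by calc y < (q y : ℝ) := hq1 y
        _ = (q x : ℝ) := by rw [hxy]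
        _ < x + δ x := hq2 x⟩
      exact absurd (hδ x y this) (not_lt.2 hy)
    · have : x ∈ Ioo y (y + δ y) := ⟨h, by calc x < (q x : ℝ) := hq1 x
        _ = (q y : ℝ) := by rw [hxy]
        _ < y + δ y := hq2 y⟩
      exact absurd (hδ y x this) (not_lt.2 hx)
  have hcov : {x : ℝ | Θ x ≠ g x} ⊆ ⋃ n : ℕ, {x : ℝ | 1/(n+1) ≤ |Θ x - g x|} := by
    intro x hx
    have habs : 0 < |Θ x - g x| := abs_pos.2 (sub_ne_zero.2 hx)
    obtain ⟨n, hn⟩ := exists_nat_one_div_lt habs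
    exact mem_iUnion.2 ⟨n, le_of_lt hn⟩
  exact Set.Countable.mono hcov (countable_iUnion fun n => main _ (by positivity))

end Aux2

section Aux3
variable {Θ : ℝ → ℝ} {t LP LM : ℝ}

lemma aux_side (hP : Tendsto Θ (nhdsWithin t (Set.Ioi t)) (nhds LP))
    (hM : Tendsto Θ (nhdsWithin t (Set.Iio t)) (nhds LM)) {ε : ℝ} (hε : 0 < ε) :
    ∃ δ > 0, (∀ s, t < s → s < t + δ → |Θ s - LP| ≤ ε) ∧
      (∀ s, t - δ < s → s < t → |Θ s - LM| ≤ ε) := by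
  obtain ⟨δ1, hδ1, h1⟩ := Metric.tendsto_nhdsWithin_nhds.1 hP ε hε
  obtain ⟨δ2, hδ2, h2⟩ := Metric.tendsto_nhdsWithin_nhds.1 hM ε hε
  refine ⟨min δ1 δ2, lt_min hδ1 hδ2, fun s hs1 hs2 => ?_, fun s hs1 hs2 => ?_⟩
  · have := h1 (hs1 : s ∈ Set.Ioi t)
      (by rw [Real.dist_eq, abs_of_pos (by linarith)]; exact lt_of_lt_of_le (by linarith [min_le_left δ1 δ2]) (le_refl _))
    rw [Real.dist_eq] at this; exact this.le
  · have := h2 (hs2 : s ∈ Set.Iio t)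
      (by rw [Real.dist_eq, abs_of_neg (by linarith)]; linarith [min_le_right δ1 δ2])
    rw [Real.dist_eq] at this; exact this.le

lemma aux_intInt (hmeas : AEMeasurable Θ volume)
    (hloc : ∀ K : Set ℝ, IsCompact K → ∃ C : ℝ, ∀ᵐ s ∂volume, s ∈ K → |Θ s| ≤ C)
    (a b : ℝ) : IntervalIntegrable Θ volume a b := by
  obtain ⟨C, hC⟩ := hloc (Set.Icc (min a b) (max a b)) isCompact_Icc
  rw [intervalIntegrable_iff]
  refine Integrable.mono' (g := fun _ => C) ?_ (hmeas.aestronglyMeasurable.restrict) ?_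
  · exact integrableOn_const
      (lt_of_le_of_lt (measure_mono Set.Ioc_subset_Icc_self) measure_Icc_lt_top).ne
  · have h1 : ∀ᵐ s ∂(volume.restrict (Set.uIoc a b)), s ∈ Set.uIoc a b := ae_restrict_mem measurableSet_uIoc
    have h2 : ∀ᵐ s ∂(volume.restrict (Set.uIoc a b)), s ∈ Set.Icc (min a b) (max a b) → |Θ s| ≤ C :=
      Filter.Eventually.filter_mono (ae_mono Measure.restrict_le_self) hC
    filter_upwards [h1, h2] with s hs1 hs2
    exact hs2 (Set.Ioc_subset_Icc_self hs1)

lemma aux_int_ub {a b c : ℝ} (hint : IntervalIntegrable Θ volume a b) (hab : a ≤ b)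
    (hbd : ∀ s ∈ Set.Ioc a b, s ≠ t → Θ s ≤ c) :
    ∫ s in a..b, Θ s ≤ c * (b - a) := by
  rw [intervalIntegral.integral_of_le hab]
  have hae : ∀ᵐ s ∂(volume.restrict (Set.Ioc a b)), Θ s ≤ c := by
    have h1 : ∀ᵐ s ∂(volume.restrict (Set.Ioc a b)), s ∈ Set.Ioc a b :=
      ae_restrict_mem measurableSet_Ioc
    have h0 : ∀ᵐ s ∂(volume.restrict (Set.Ioc a b)), s ≠ t := by
      refine Filter.Eventually.filter_mono (ae_mono Measure.restrict_le_self) ?_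
      rw [ae_iff]
      have hset : {s : ℝ | ¬ s ≠ t} = {t} := by ext s; simp
      rw [hset, Real.volume_singleton]
    filter_upwards [h1, h0] with s hs1 hs0
    exact hbd s hs1 hs0
  have hconst : IntegrableOn (fun _ => c) (Set.Ioc a b) volume := by
    rw [integrableOn_const_iff]; right; exact measure_Ioc_lt_top
  calc ∫ s in Set.Ioc a b, Θ s ≤ ∫ _ in Set.Ioc a b, c := by
        apply integral_mono_ae (intervalIntegrable_iff_integrableOn_Ioc_of_le hab |>.1 hint) hconst hae
    _ = c * (b - a) := by
        rw [setIntegral_const, Real.volume_real_Ioc_of_le hab, smul_eq_mul,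
          mul_comm]

lemma aux_int_lb {a b c : ℝ} (hint : IntervalIntegrable Θ volume a b) (hab : a ≤ b)
    (hbd : ∀ s ∈ Set.Ioc a b, s ≠ t → c ≤ Θ s) :
    c * (b - a) ≤ ∫ s in a..b, Θ s := by
  have := aux_int_ub (Θ := fun s => -Θ s) (t := t) (c := -c) hint.neg hab
    (fun s hs hst => by simpa using hbd s hs hst)
  rw [intervalIntegral.integral_neg] at this
  linarith

end Aux3

section Aux4
variable {Θ : ℝ → ℝ} {t LP LM : ℝ}

lemma aux_essInf_tendsto (hP : Tendsto Θ (nhdsWithin t (Set.Ioi t)) (nhds LP))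
    (hM : Tendsto Θ (nhdsWithin t (Set.Iio t)) (nhds LM)) :
    Tendsto (fun μ : ℝ => essInf Θ (volume.restrict (Set.Icc (t - μ) (t + μ))))
      (nhdsWithin 0 (Set.Ioi 0)) (nhds (min LM LP)) := by
  rw [Metric.tendsto_nhds]
  intro ε hε
  obtain ⟨δ, hδ, hR, hL⟩ := aux_side hP hM (half_pos hε)
  filter_upwards [Ioo_mem_nhdsGT_of_mem ⟨le_refl (0:ℝ), half_pos hδ⟩] with μ hμ
  obtain ⟨hμ0, hμδ⟩ := hμ
  set ν := volume.restrict (Set.Icc (t - μ) (t + μ)) with hν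
  have hν0 : ν ≠ 0 := by
    rw [← Measure.measure_univ_ne_zero, hν, Measure.restrict_apply_univ, Real.volume_Icc]
    simp only [ne_eq, ENNReal.ofReal_eq_zero, not_le]
    linarith
  haveI : NeBot (ae ν) := ae_neBot.2 hν0
  have hmem : ∀ᵐ s ∂ν, s ∈ Set.Icc (t - μ) (t + μ) := ae_restrict_mem measurableSet_Icc
  have hne : ∀ᵐ s ∂ν, s ≠ t := by
    refine Filter.Eventually.filter_mono (ae_mono Measure.restrict_le_self) ?_
    rw [ae_iff]
    have hset : {s : ℝ | ¬ s ≠ t} = {t} := by ext s; simp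
    rw [hset, Real.volume_singleton]
  have hbd : ∀ᵐ s ∂ν, min LM LP - ε/2 ≤ Θ s ∧ Θ s ≤ max LM LP + ε/2 := by
    filter_upwards [hmem, hne] with s hs hst
    rcases lt_or_gt_of_ne hst with h | h
    · have := hL s (by linarith [hs.1]) h
      rw [abs_le] at this
      constructor
      · linarith [min_le_left LM LP]
      · linarith [le_max_left LM LP]
    · have := hR s h (by linarith [hs.2])
      rw [abs_le] at this
      constructor
      · linarith [min_le_right LM LP]
      · linarith [le_max_right LM LP]
  have hbddge : IsBoundedUnder (· ≥ ·) (ae ν) Θ :=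
    ⟨min LM LP - ε/2, hbd.mono fun s hs => hs.1⟩
  have hbddle : IsBoundedUnder (· ≤ ·) (ae ν) Θ :=
    ⟨max LM LP + ε/2, hbd.mono fun s hs => hs.2⟩
  have hlower : min LM LP - ε/2 ≤ essInf Θ ν :=
    le_liminf_of_le hbddle.isCoboundedUnder_ge (hbd.mono fun s hs => hs.1)
  have hupper : essInf Θ ν ≤ min LM LP + ε/2 := by
    refine liminf_le_of_frequently_le ?_ hbddge
    -- frequently Θ s ≤ min LM LP + ε/2
    have key : ∀ I : Set ℝ, I ⊆ Set.Icc (t - μ) (t + μ) → 0 < volume I →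
        (∀ s ∈ I, Θ s ≤ min LM LP + ε/2) → MeasurableSet I →
        ∃ᶠ s in ae ν, Θ s ≤ min LM LP + ε/2 := by
      intro I hsub hpos hIbd hImeas
      rw [Filter.Frequently]
      intro hcon
      rw [ae_iff] at hcon
      simp only [not_not] at hcon
      have h1 : ν I = 0 := measure_mono_null (fun s hs => hIbd s hs) hcon
      rw [hν, Measure.restrict_apply hImeas, Set.inter_eq_self_of_subset_left hsub] at h1
      exact absurd h1 (ne_of_gt hpos)
    rcases min_cases LM LP with ⟨hmin, hle⟩ | ⟨hmin, hle⟩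
    · refine key (Set.Ioo (t - μ) t) (fun s hs => ⟨hs.1.le, by linarith [hs.2]⟩) ?_ ?_
        measurableSet_Ioo
      · rw [Real.volume_Ioo]; rw [ENNReal.ofReal_pos]; linarith
      · intro s hs
        have := hL s (by linarith [hs.1]) hs.2
        rw [abs_le] at this; rw [hmin]; linarith
    · refine key (Set.Ioo t (t + μ)) (fun s hs => ⟨by linarith [hs.1], hs.2.le⟩) ?_ ?_
        measurableSet_Ioo
      · rw [Real.volume_Ioo]; rw [ENNReal.ofReal_pos]; linarith
      · intro s hs
        have := hR s hs.1 (by linarith [hs.2])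
        rw [abs_le] at this; rw [hmin]; linarith
  rw [Real.dist_eq, abs_lt]
  constructor <;> linarith

lemma aux_essSup_tendsto (hP : Tendsto Θ (nhdsWithin t (Set.Ioi t)) (nhds LP))
    (hM : Tendsto Θ (nhdsWithin t (Set.Iio t)) (nhds LM)) :
    Tendsto (fun μ : ℝ => essSup Θ (volume.restrict (Set.Icc (t - μ) (t + μ))))
      (nhdsWithin 0 (Set.Ioi 0)) (nhds (max LM LP)) := by
  rw [Metric.tendsto_nhds]
  intro ε hε
  obtain ⟨δ, hδ, hR, hL⟩ := aux_side hP hM (half_pos hε)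
  filter_upwards [Ioo_mem_nhdsGT_of_mem ⟨le_refl (0:ℝ), half_pos hδ⟩] with μ hμ
  obtain ⟨hμ0, hμδ⟩ := hμ
  set ν := volume.restrict (Set.Icc (t - μ) (t + μ)) with hν
  have hν0 : ν ≠ 0 := by
    rw [← Measure.measure_univ_ne_zero, hν, Measure.restrict_apply_univ, Real.volume_Icc]
    simp only [ne_eq, ENNReal.ofReal_eq_zero, not_le]
    linarith
  haveI : NeBot (ae ν) := ae_neBot.2 hν0
  have hmem : ∀ᵐ s ∂ν, s ∈ Set.Icc (t - μ) (t + μ) := ae_restrict_mem measurableSet_Icc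
  have hne : ∀ᵐ s ∂ν, s ≠ t := by
    refine Filter.Eventually.filter_mono (ae_mono Measure.restrict_le_self) ?_
    rw [ae_iff]
    have hset : {s : ℝ | ¬ s ≠ t} = {t} := by ext s; simp
    rw [hset, Real.volume_singleton]
  have hbd : ∀ᵐ s ∂ν, min LM LP - ε/2 ≤ Θ s ∧ Θ s ≤ max LM LP + ε/2 := by
    filter_upwards [hmem, hne] with s hs hst
    rcases lt_or_gt_of_ne hst with h | h
    · have := hL s (by linarith [hs.1]) h
      rw [abs_le] at this
      constructor
      · linarith [min_le_left LM LP]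
      · linarith [le_max_left LM LP]
    · have := hR s h (by linarith [hs.2])
      rw [abs_le] at this
      constructor
      · linarith [min_le_right LM LP]
      · linarith [le_max_right LM LP]
  have hbddge : IsBoundedUnder (· ≥ ·) (ae ν) Θ :=
    ⟨min LM LP - ε/2, hbd.mono fun s hs => hs.1⟩
  have hbddle : IsBoundedUnder (· ≤ ·) (ae ν) Θ :=
    ⟨max LM LP + ε/2, hbd.mono fun s hs => hs.2⟩
  have hupper : essSup Θ ν ≤ max LM LP + ε/2 :=
    limsup_le_of_le hbddge.isCoboundedUnder_le (hbd.mono fun s hs => hs.2)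
  have hlower : max LM LP - ε/2 ≤ essSup Θ ν := by
    refine le_limsup_of_frequently_le ?_ hbddle
    have key : ∀ I : Set ℝ, I ⊆ Set.Icc (t - μ) (t + μ) → 0 < volume I →
        (∀ s ∈ I, max LM LP - ε/2 ≤ Θ s) → MeasurableSet I →
        ∃ᶠ s in ae ν, max LM LP - ε/2 ≤ Θ s := by
      intro I hsub hpos hIbd hImeas
      rw [Filter.Frequently]
      intro hcon
      rw [ae_iff] at hcon
      simp only [not_not] at hcon
      have h1 : ν I = 0 := measure_mono_null (fun s hs => hIbd s hs) hcon
      rw [hν, Measure.restrict_apply hImeas, Set.inter_eq_self_of_subset_left hsub] at h1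
      exact absurd h1 (ne_of_gt hpos)
    rcases max_cases LM LP with ⟨hmax, hge⟩ | ⟨hmax, hge⟩
    · refine key (Set.Ioo (t - μ) t) (fun s hs => ⟨hs.1.le, by linarith [hs.2]⟩) ?_ ?_
        measurableSet_Ioo
      · rw [Real.volume_Ioo]; rw [ENNReal.ofReal_pos]; linarith
      · intro s hs
        have := hL s (by linarith [hs.1]) hs.2
        rw [abs_le] at this; rw [hmax]; linarith
    · refine key (Set.Ioo t (t + μ)) (fun s hs => ⟨by linarith [hs.1], hs.2.le⟩) ?_ ?_
        measurableSet_Ioo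
      · rw [Real.volume_Ioo]; rw [ENNReal.ofReal_pos]; linarith
      · intro s hs
        have := hR s hs.1 (by linarith [hs.2])
        rw [abs_le] at this; rw [hmax]; linarith
  rw [Real.dist_eq, abs_lt]
  constructor <;> linarith

end Aux4

section Aux5
variable {Θ : ℝ → ℝ} {t LP LM : ℝ}

lemma aux_l_neBot : NeBot ((nhds t) ×ˢ (nhdsWithin (0:ℝ) (Set.Ioi 0))) :=
  Filter.prod_neBot.2 ⟨inferInstance, inferInstance⟩

lemma aux_F_eq (hint : ∀ a b : ℝ, IntervalIntegrable Θ volume a b) (d : ℝ) (p : ℝ × ℝ) :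
    ((∫ s in (0:ℝ)..(p.1 + p.2 * d), Θ s) - ∫ s in (0:ℝ)..p.1, Θ s) / p.2
      = (∫ s in p.1..(p.1 + p.2 * d), Θ s) / p.2 := by
  rw [intervalIntegral.integral_interval_sub_left (hint 0 _) (hint 0 _)]

lemma aux_clarke_deriv_eq (hint : ∀ a b : ℝ, IntervalIntegrable Θ volume a b) (d : ℝ) :
    clarkeDeriv (fun x => ∫ s in (0:ℝ)..x, Θ s) t d
      = Filter.limsup (fun p : ℝ × ℝ => (∫ s in p.1..(p.1 + p.2 * d), Θ s) / p.2)
        ((nhds t) ×ˢ (nhdsWithin 0 (Set.Ioi 0))) := by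
  unfold clarkeDeriv
  exact limsup_congr (Eventually.of_forall fun p => aux_F_eq hint d p)

/-- The eventual two-sided bound on difference quotients, d > 0. -/
lemma aux_ev_pos (hint : ∀ a b : ℝ, IntervalIntegrable Θ volume a b)
    (hP : Tendsto Θ (nhdsWithin t (Set.Ioi t)) (nhds LP))
    (hM : Tendsto Θ (nhdsWithin t (Set.Iio t)) (nhds LM)) {d : ℝ} (hd : 0 < d)
    {ε : ℝ} (hε : 0 < ε) :
    ∀ᶠ p : ℝ × ℝ in (nhds t) ×ˢ (nhdsWithin 0 (Set.Ioi 0)),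
      (min LM LP - ε) * d ≤ (∫ s in p.1..(p.1 + p.2 * d), Θ s) / p.2 ∧
      (∫ s in p.1..(p.1 + p.2 * d), Θ s) / p.2 ≤ (max LM LP + ε) * d := by
  obtain ⟨δ, hδ, hR, hL⟩ := aux_side hP hM hε
  have hev : (Metric.ball t (δ/2)) ×ˢ (Set.Ioo 0 (δ/(2*d))) ∈
      (nhds t) ×ˢ (nhdsWithin (0:ℝ) (Set.Ioi 0)) :=
    prod_mem_prod (Metric.ball_mem_nhds t (by linarith))
      (Ioo_mem_nhdsGT_of_mem ⟨le_refl 0, by positivity⟩)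
  filter_upwards [hev] with p hp
  obtain ⟨hp1, hp2⟩ := hp
  rw [Metric.mem_ball, Real.dist_eq, abs_lt] at hp1
  obtain ⟨hl2, hl3⟩ := hp2
  set τ := p.1; set l := p.2
  have h2d : l * (2*d) < δ := (lt_div_iff₀ (by positivity)).1 hl3
  have heq2 : l * (2*d) = 2*(l*d) := by ring
  have hld : l * d < δ/2 := by linarith
  have hldpos : 0 < l * d := by positivity
  have hab : τ ≤ τ + l * d := by linarith
  have hbound : ∀ s ∈ Set.Ioc τ (τ + l * d), s ≠ t →
      min LM LP - ε ≤ Θ s ∧ Θ s ≤ max LM LP + ε := by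
    intro s hs hst
    have hs1 : t - δ < s := by linarith [hs.1]
    have hs2 : s < t + δ := by linarith [hs.2]
    rcases lt_or_gt_of_ne hst with h | h
    · have := hL s hs1 h
      rw [abs_le] at this
      exact ⟨by linarith [min_le_left LM LP], by linarith [le_max_left LM LP]⟩
    · have := hR s h hs2
      rw [abs_le] at this
      exact ⟨by linarith [min_le_right LM LP], by linarith [le_max_right LM LP]⟩
  have hub := aux_int_ub (t := t) (hint τ (τ + l * d)) hab (fun s hs hst => (hbound s hs hst).2)
  have hlb := aux_int_lb (t := t) (hint τ (τ + l * d)) hab (fun s hs hst => (hbound s hs hst).1)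
  have hll : (0:ℝ) < l := hl2
  constructor
  · rw [le_div_iff₀ hll]
    calc (min LM LP - ε) * d * l = (min LM LP - ε) * (τ + l * d - τ) := by ring
      _ ≤ _ := hlb
  · rw [div_le_iff₀ hll]
    calc (∫ s in τ..(τ + l * d), Θ s) ≤ (max LM LP + ε) * (τ + l * d - τ) := hub
      _ = (max LM LP + ε) * d * l := by ring

lemma aux_clarke_pos (hint : ∀ a b : ℝ, IntervalIntegrable Θ volume a b)
    (hP : Tendsto Θ (nhdsWithin t (Set.Ioi t)) (nhds LP))
    (hM : Tendsto Θ (nhdsWithin t (Set.Iio t)) (nhds LM)) {d : ℝ} (hd : 0 < d) :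
    clarkeDeriv (fun x => ∫ s in (0:ℝ)..x, Θ s) t d = max LM LP * d := by
  haveI := aux_l_neBot (t := t)
  rw [aux_clarke_deriv_eq hint]
  set l := (nhds t) ×ˢ (nhdsWithin (0:ℝ) (Set.Ioi 0))
  set F : ℝ × ℝ → ℝ := fun p => (∫ s in p.1..(p.1 + p.2 * d), Θ s) / p.2 with hF
  have hbddle : IsBoundedUnder (· ≤ ·) l F :=
    ⟨(max LM LP + 1) * d, (aux_ev_pos hint hP hM hd one_pos).mono fun p hp => hp.2⟩
  have hbddge : IsBoundedUnder (· ≥ ·) l F :=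
    ⟨(min LM LP - 1) * d, (aux_ev_pos hint hP hM hd one_pos).mono fun p hp => hp.1⟩
  refine le_antisymm ?_ ?_
  · -- limsup ≤ M * d
    refine le_of_forall_pos_le_add fun η hη => ?_
    have hε : 0 < η / d := by positivity
    have := limsup_le_of_le hbddge.isCoboundedUnder_le
      ((aux_ev_pos hint hP hM hd hε).mono fun p hp => hp.2)
    calc limsup F l ≤ (max LM LP + η/d) * d := this
      _ = max LM LP * d + η := by field_simp
  · -- M * d ≤ limsup
    rw [max_mul_of_nonneg _ _ hd.le, max_le_iff]
    have hseq : ∀ (τfun : ℕ → ℝ) (hτ : Tendsto τfun atTop (nhds t)),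
        Tendsto (fun n => (τfun n, 1/((n:ℝ)+1))) atTop l := by
      intro τfun hτ
      apply Tendsto.prodMk hτ
      apply tendsto_nhdsWithin_of_tendsto_nhds_of_eventually_within _
        tendsto_one_div_add_atTop_nhds_zero_nat
      exact Eventually.of_forall fun n => Set.mem_Ioi.2 (by positivity)
    have hlampos : ∀ n : ℕ, (0:ℝ) < 1/((n:ℝ)+1) := fun n => by positivity
    have hlamto : Tendsto (fun n : ℕ => 1/((n:ℝ)+1)) atTop (nhds 0) :=
      tendsto_one_div_add_atTop_nhds_zero_nat
    constructor
    · -- LM * d ≤ limsup : τ n = t - 2 * λ n * d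
      refine le_of_forall_pos_le_add fun η hη => ?_
      have hε : 0 < η / d := by positivity
      obtain ⟨δ, hδ, hR, hL⟩ := aux_side hP hM hε
      set τfun : ℕ → ℝ := fun n => t - 2 * (1/((n:ℝ)+1)) * d with hτfun
      have hτ : Tendsto τfun atTop (nhds t) := by
        have h0 : Tendsto (fun n : ℕ => t - 2 * (1/((n:ℝ)+1)) * d) atTop (nhds (t - 2 * 0 * d)) :=
          tendsto_const_nhds.sub ((hlamto.const_mul 2).mul_const d)
        have he : t - 2 * 0 * d = t := by ring
        rw [he] at h0
        exact h0
      have hsmall : ∀ᶠ n : ℕ in atTop, 1/((n:ℝ)+1) < δ/(2*d) :=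
        hlamto.eventually_lt_const (by positivity)
      have hFlb : ∀ᶠ n : ℕ in atTop, (LM - η/d) * d ≤ F (τfun n, 1/((n:ℝ)+1)) := by
        filter_upwards [hsmall] with n hn
        set lam := 1/((n:ℝ)+1)
        have hlam : (0:ℝ) < lam := hlampos n
        have h2d : lam * (2*d) < δ := (lt_div_iff₀ (by positivity)).1 hn
        have heq2 : lam * (2*d) = 2*(lam*d) := by ring
        have hldpos : 0 < lam * d := by positivity
        have hab : τfun n ≤ τfun n + lam * d := by linarith
        have hlb := aux_int_lb (t := t) (c := LM - η/d) (hint (τfun n) (τfun n + lam * d)) hab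
          (fun s hs hst => ?_)
        · rw [hF]
          simp only
          rw [le_div_iff₀ hlam]
          calc (LM - η/d) * d * lam = (LM - η/d) * (τfun n + lam * d - τfun n) := by ring
            _ ≤ _ := hlb
        · -- s ∈ Ioc (t - 2 lam d) (t - lam d), bound via hL
          have he1 : τfun n = t - 2 * (lam * d) := by rw [hτfun]; ring
          have he2 : τfun n + lam * d = t - lam * d := by rw [hτfun]; ring
          have hs1 : t - δ < s := by rw [he1] at hs; linarith [hs.1]
          have hs2 : s < t := by rw [he2] at hs; linarith [hs.2]
          have := hL s hs1 hs2
          rw [abs_le] at this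
          linarith
      have hfreq : ∃ᶠ p in l, (LM - η/d) * d ≤ F p :=
        (hseq τfun hτ).frequently hFlb.frequently
      have := le_limsup_of_frequently_le hfreq hbddle
      calc LM * d = (LM - η/d) * d + η := by field_simp; ring
        _ ≤ limsup F l + η := by linarith
    · -- LP * d ≤ limsup : τ n = t + λ n * d
      refine le_of_forall_pos_le_add fun η hη => ?_
      have hε : 0 < η / d := by positivity
      obtain ⟨δ, hδ, hR, hL⟩ := aux_side hP hM hε
      set τfun : ℕ → ℝ := fun n => t + (1/((n:ℝ)+1)) * d with hτfun
      have hτ : Tendsto τfun atTop (nhds t) := by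
        have h0 : Tendsto (fun n : ℕ => t + (1/((n:ℝ)+1)) * d) atTop (nhds (t + 0 * d)) :=
          tendsto_const_nhds.add (hlamto.mul_const d)
        have he : t + 0 * d = t := by ring
        rw [he] at h0
        exact h0
      have hsmall : ∀ᶠ n : ℕ in atTop, 1/((n:ℝ)+1) < δ/(2*d) :=
        hlamto.eventually_lt_const (by positivity)
      have hFlb : ∀ᶠ n : ℕ in atTop, (LP - η/d) * d ≤ F (τfun n, 1/((n:ℝ)+1)) := by
        filter_upwards [hsmall] with n hn
        set lam := 1/((n:ℝ)+1)
        have hlam : (0:ℝ) < lam := hlampos n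
        have h2d : lam * (2*d) < δ := (lt_div_iff₀ (by positivity)).1 hn
        have heq2 : lam * (2*d) = 2*(lam*d) := by ring
        have hldpos : 0 < lam * d := by positivity
        have hab : τfun n ≤ τfun n + lam * d := by linarith
        have hlb := aux_int_lb (t := t) (c := LP - η/d) (hint (τfun n) (τfun n + lam * d)) hab
          (fun s hs hst => ?_)
        · rw [hF]
          simp only
          rw [le_div_iff₀ hlam]
          calc (LP - η/d) * d * lam = (LP - η/d) * (τfun n + lam * d - τfun n) := by ring
            _ ≤ _ := hlb
        · have he1 : τfun n = t + lam * d := by rw [hτfun]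
          have he2 : τfun n + lam * d = t + 2 * (lam * d) := by rw [hτfun]; ring
          have hs1 : t < s := by rw [he1] at hs; linarith [hs.1]
          have hs2 : s < t + δ := by rw [he2] at hs; linarith [hs.2]
          have := hR s hs1 hs2
          rw [abs_le] at this
          linarith
      have hfreq : ∃ᶠ p in l, (LP - η/d) * d ≤ F p :=
        (hseq τfun hτ).frequently hFlb.frequently
      have := le_limsup_of_frequently_le hfreq hbddle
      calc LP * d = (LP - η/d) * d + η := by field_simp; ring
        _ ≤ limsup F l + η := by linarith

end Aux5

section Aux6
variable {Θ : ℝ → ℝ} {t LP LM : ℝ}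

lemma aux_clarke_zero (j : ℝ → ℝ) : clarkeDeriv j t 0 = 0 := by
  haveI := aux_l_neBot (t := t)
  unfold clarkeDeriv
  have : (fun p : ℝ × ℝ => (j (p.1 + p.2 * 0) - j p.1) / p.2) = fun _ => (0:ℝ) := by
    funext p; simp
  rw [this]
  exact limsup_const 0

lemma aux_ev_neg (hint : ∀ a b : ℝ, IntervalIntegrable Θ volume a b)
    (hP : Tendsto Θ (nhdsWithin t (Set.Ioi t)) (nhds LP))
    (hM : Tendsto Θ (nhdsWithin t (Set.Iio t)) (nhds LM)) {d : ℝ} (hd : d < 0)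
    {ε : ℝ} (hε : 0 < ε) :
    ∀ᶠ p : ℝ × ℝ in (nhds t) ×ˢ (nhdsWithin 0 (Set.Ioi 0)),
      (max LM LP + ε) * d ≤ (∫ s in p.1..(p.1 + p.2 * d), Θ s) / p.2 ∧
      (∫ s in p.1..(p.1 + p.2 * d), Θ s) / p.2 ≤ (min LM LP - ε) * d := by
  obtain ⟨δ, hδ, hR, hL⟩ := aux_side hP hM hε
  set e := -d with he
  have hepos : 0 < e := by rw [he]; linarith
  have hev : (Metric.ball t (δ/2)) ×ˢ (Set.Ioo 0 (δ/(2*e))) ∈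
      (nhds t) ×ˢ (nhdsWithin (0:ℝ) (Set.Ioi 0)) :=
    prod_mem_prod (Metric.ball_mem_nhds t (by linarith))
      (Ioo_mem_nhdsGT_of_mem ⟨le_refl 0, by positivity⟩)
  filter_upwards [hev] with p hp
  obtain ⟨hp1, hp2⟩ := hp
  rw [Metric.mem_ball, Real.dist_eq, abs_lt] at hp1
  obtain ⟨hl2, hl3⟩ := hp2
  set τ := p.1; set l := p.2
  have h2e : l * (2*e) < δ := (lt_div_iff₀ (by positivity)).1 hl3
  have heq2 : l * (2*e) = 2*(l*e) := by ring
  have hlepos : 0 < l * e := by positivity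
  have hde : τ + l * d = τ - l * e := by rw [he]; ring
  have hab : τ + l * d ≤ τ := by rw [hde]; linarith
  have hbound : ∀ s ∈ Set.Ioc (τ + l * d) τ, s ≠ t →
      min LM LP - ε ≤ Θ s ∧ Θ s ≤ max LM LP + ε := by
    intro s hs hst
    have hs1 : t - δ < s := by rw [hde] at hs; linarith [hs.1]
    have hs2 : s < t + δ := by linarith [hs.2]
    rcases lt_or_gt_of_ne hst with h | h
    · have := hL s hs1 h
      rw [abs_le] at this
      exact ⟨by linarith [min_le_left LM LP], by linarith [le_max_left LM LP]⟩
    · have := hR s h hs2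
      rw [abs_le] at this
      exact ⟨by linarith [min_le_right LM LP], by linarith [le_max_right LM LP]⟩
  have hub := aux_int_ub (t := t) (c := max LM LP + ε) (hint _ τ) hab
    (fun s hs hst => (hbound s hs hst).2)
  have hlb := aux_int_lb (t := t) (c := min LM LP - ε) (hint _ τ) hab
    (fun s hs hst => (hbound s hs hst).1)
  have hsymm : (∫ s in τ..(τ + l * d), Θ s) = -(∫ s in (τ + l * d)..τ, Θ s) :=
    intervalIntegral.integral_symm _ _
  have hlen : τ - (τ + l * d) = l * e := by rw [he]; ring
  rw [hlen] at hub hlb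
  constructor
  · rw [hsymm, le_div_iff₀ hl2]
    calc (max LM LP + ε) * d * l = -((max LM LP + ε) * (l * e)) := by rw [he]; ring
      _ ≤ -(∫ s in (τ + l * d)..τ, Θ s) := by linarith
  · rw [hsymm, div_le_iff₀ hl2]
    calc -(∫ s in (τ + l * d)..τ, Θ s) ≤ -((min LM LP - ε) * (l * e)) := by linarith
      _ = (min LM LP - ε) * d * l := by rw [he]; ring

lemma aux_clarke_neg (hint : ∀ a b : ℝ, IntervalIntegrable Θ volume a b)
    (hP : Tendsto Θ (nhdsWithin t (Set.Ioi t)) (nhds LP))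
    (hM : Tendsto Θ (nhdsWithin t (Set.Iio t)) (nhds LM)) {d : ℝ} (hd : d < 0) :
    clarkeDeriv (fun x => ∫ s in (0:ℝ)..x, Θ s) t d = min LM LP * d := by
  haveI := aux_l_neBot (t := t)
  rw [aux_clarke_deriv_eq hint]
  set l := (nhds t) ×ˢ (nhdsWithin (0:ℝ) (Set.Ioi 0))
  set F : ℝ × ℝ → ℝ := fun p => (∫ s in p.1..(p.1 + p.2 * d), Θ s) / p.2 with hF
  set e := -d with he
  have hepos : 0 < e := by rw [he]; linarith
  have hbddle : IsBoundedUnder (· ≤ ·) l F :=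
    ⟨(min LM LP - 1) * d, (aux_ev_neg hint hP hM hd one_pos).mono fun p hp => hp.2⟩
  have hbddge : IsBoundedUnder (· ≥ ·) l F :=
    ⟨(max LM LP + 1) * d, (aux_ev_neg hint hP hM hd one_pos).mono fun p hp => hp.1⟩
  have hlamto : Tendsto (fun n : ℕ => 1/((n:ℝ)+1)) atTop (nhds 0) :=
    tendsto_one_div_add_atTop_nhds_zero_nat
  have hlampos : ∀ n : ℕ, (0:ℝ) < 1/((n:ℝ)+1) := fun n => by positivity
  have hseq : ∀ (τfun : ℕ → ℝ), Tendsto τfun atTop (nhds t) →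
      Tendsto (fun n => (τfun n, 1/((n:ℝ)+1))) atTop l := by
    intro τfun hτ
    apply Tendsto.prodMk hτ
    apply tendsto_nhdsWithin_of_tendsto_nhds_of_eventually_within _ hlamto
    exact Eventually.of_forall fun n => Set.mem_Ioi.2 (by positivity)
  refine le_antisymm ?_ ?_
  · -- limsup ≤ min * d
    refine le_of_forall_pos_le_add fun η hη => ?_
    have hε : 0 < η / e := by positivity
    have := limsup_le_of_le hbddge.isCoboundedUnder_le
      ((aux_ev_neg hint hP hM hd hε).mono fun p hp => hp.2)
    calc limsup F l ≤ (min LM LP - η/e) * d := this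
      _ = min LM LP * d + η := by rw [he, div_neg, sub_neg_eq_add, add_mul, div_mul_cancel₀ η hd.ne]
  · -- min * d ≤ limsup : min*d = max (LM*d) (LP*d)
    have hmm : min LM LP * d = max (LM * d) (LP * d) := by
      rcases le_total LM LP with h | h
      · rw [min_eq_left h, max_eq_left (by nlinarith)]
      · rw [min_eq_right h, max_eq_right (by nlinarith)]
    rw [hmm, max_le_iff]
    constructor
    · -- LM * d ≤ limsup : τ n = t
      refine le_of_forall_pos_le_add fun η hη => ?_
      have hε : 0 < η / e := by positivity
      obtain ⟨δ, hδ, hR, hL⟩ := aux_side hP hM hε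
      have hsmall : ∀ᶠ n : ℕ in atTop, 1/((n:ℝ)+1) < δ/(2*e) :=
        hlamto.eventually_lt_const (by positivity)
      have hFlb : ∀ᶠ n : ℕ in atTop, LM * d - η ≤ F (t, 1/((n:ℝ)+1)) := by
        filter_upwards [hsmall] with n hn
        set lam := 1/((n:ℝ)+1)
        have hlam : (0:ℝ) < lam := hlampos n
        have h2e : lam * (2*e) < δ := (lt_div_iff₀ (by positivity)).1 hn
        have heq2 : lam * (2*e) = 2*(lam*e) := by ring
        have hlepos : 0 < lam * e := by positivity
        have hde : t + lam * d = t - lam * e := by rw [he]; ring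
        have hab : t + lam * d ≤ t := by rw [hde]; linarith
        have hub := aux_int_ub (t := t) (c := LM + η/e) (hint _ t) hab
          (fun s hs hst => ?_)
        · have hsymm : (∫ s in t..(t + lam * d), Θ s) = -(∫ s in (t + lam * d)..t, Θ s) :=
            intervalIntegral.integral_symm _ _
          have hlen : t - (t + lam * d) = lam * e := by rw [he]; ring
          rw [hlen] at hub
          rw [hF]
          simp only
          rw [hsymm, le_div_iff₀ hlam]
          have hene : e ≠ 0 := ne_of_gt hepos
          have h1 : η / e * e = η := div_mul_cancel₀ η hene
          have hexp : -((LM + η/e) * (lam * e)) = (LM * d - η) * lam := by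
            calc -((LM + η/e) * (lam * e)) = -(LM*(lam*e)) - (η/e*e)*lam := by ring
              _ = (LM * d - η) * lam := by rw [h1, he]; ring
          calc (LM * d - η) * lam = -((LM + η/e) * (lam * e)) := hexp.symm
            _ ≤ -(∫ s in (t + lam * d)..t, Θ s) := by linarith
        · have hs2 : s ≤ t := hs.2
          have hslt : s < t := lt_of_le_of_ne hs2 hst
          have hs1 : t - δ < s := by rw [hde] at hs; linarith [hs.1]
          have := hL s hs1 hslt
          rw [abs_le] at this
          linarith
      have hfreq : ∃ᶠ p in l, LM * d - η ≤ F p :=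
        (hseq (fun _ => t) tendsto_const_nhds).frequently hFlb.frequently
      have := le_limsup_of_frequently_le hfreq hbddle
      linarith
    · -- LP * d ≤ limsup : τ n = t - lam * d = t + lam * e
      refine le_of_forall_pos_le_add fun η hη => ?_
      have hε : 0 < η / e := by positivity
      obtain ⟨δ, hδ, hR, hL⟩ := aux_side hP hM hε
      set τfun : ℕ → ℝ := fun n => t - (1/((n:ℝ)+1)) * d with hτfun
      have hτ : Tendsto τfun atTop (nhds t) := by
        have h0 : Tendsto (fun n : ℕ => t - (1/((n:ℝ)+1)) * d) atTop (nhds (t - 0 * d)) :=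
          tendsto_const_nhds.sub (hlamto.mul_const d)
        have he0 : t - 0 * d = t := by ring
        rw [he0] at h0
        exact h0
      have hsmall : ∀ᶠ n : ℕ in atTop, 1/((n:ℝ)+1) < δ/(2*e) :=
        hlamto.eventually_lt_const (by positivity)
      have hFlb : ∀ᶠ n : ℕ in atTop, LP * d - η ≤ F (τfun n, 1/((n:ℝ)+1)) := by
        filter_upwards [hsmall] with n hn
        set lam := 1/((n:ℝ)+1)
        have hlam : (0:ℝ) < lam := hlampos n
        have h2e : lam * (2*e) < δ := (lt_div_iff₀ (by positivity)).1 hn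
        have heq2 : lam * (2*e) = 2*(lam*e) := by ring
        have hlepos : 0 < lam * e := by positivity
        have hde1 : τfun n + lam * d = t := by rw [hτfun]; ring
        have hde2 : τfun n = t + lam * e := by rw [hτfun, he]; ring
        have hab : τfun n + lam * d ≤ τfun n := by rw [hde1, hde2]; linarith
        have hub := aux_int_ub (t := t) (c := LP + η/e) (hint _ (τfun n)) hab
          (fun s hs hst => ?_)
        · have hsymm : (∫ s in (τfun n)..(τfun n + lam * d), Θ s)
              = -(∫ s in (τfun n + lam * d)..(τfun n), Θ s) :=
            intervalIntegral.integral_symm _ _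
          have hlen : τfun n - (τfun n + lam * d) = lam * e := by rw [he]; ring
          rw [hlen] at hub
          rw [hF]
          simp only
          rw [hsymm, le_div_iff₀ hlam]
          have hene : e ≠ 0 := ne_of_gt hepos
          have h1 : η / e * e = η := div_mul_cancel₀ η hene
          have hexp : -((LP + η/e) * (lam * e)) = (LP * d - η) * lam := by
            calc -((LP + η/e) * (lam * e)) = -(LP*(lam*e)) - (η/e*e)*lam := by ring
              _ = (LP * d - η) * lam := by rw [h1, he]; ring
          calc (LP * d - η) * lam = -((LP + η/e) * (lam * e)) := hexp.symm
            _ ≤ -(∫ s in (τfun n + lam * d)..(τfun n), Θ s) := by linarith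
        · have hs1 : t < s := by rw [hde1] at hs; exact hs.1
          have hs2 : s < t + δ := by rw [hde2] at hs; linarith [hs.2]
          have := hR s hs1 hs2
          rw [abs_le] at this
          linarith
      have hfreq : ∃ᶠ p in l, LP * d - η ≤ F p :=
        (hseq τfun hτ).frequently hFlb.frequently
      have := le_limsup_of_frequently_le hfreq hbddle
      linarith
end Aux6

theorem stmt_9 (Θ : ℝ → ℝ)
    (hloc : ∀ K : Set ℝ, IsCompact K → ∃ C : ℝ, ∀ᵐ t ∂volume, t ∈ K → |Θ t| ≤ C)
    (hlimR : ∀ t : ℝ, ∃ L : ℝ, Tendsto Θ (nhdsWithin t (Set.Ioi t)) (nhds L))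
    (hlimL : ∀ t : ℝ, ∃ L : ℝ, Tendsto Θ (nhdsWithin t (Set.Iio t)) (nhds L))
    (ΘL ΘU : ℝ → ℝ)
    (hΘL : ∀ t : ℝ, Tendsto
      (fun μ : ℝ => essInf Θ (volume.restrict (Set.Icc (t - μ) (t + μ))))
      (nhdsWithin 0 (Set.Ioi 0)) (nhds (ΘL t)))
    (hΘU : ∀ t : ℝ, Tendsto
      (fun μ : ℝ => essSup Θ (volume.restrict (Set.Icc (t - μ) (t + μ))))
      (nhdsWithin 0 (Set.Ioi 0)) (nhds (ΘU t)))
    (t : ℝ) :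
    clarkeSubdiff (fun x : ℝ => ∫ s in (0:ℝ)..x, Θ s) t = Set.Icc (ΘL t) (ΘU t) := by
  choose g hg using hlimR
  choose gL hgL using hlimL
  have hcnt : Set.Countable {x : ℝ | Θ x ≠ g x} := aux_countable hg
  have haeeq : Θ =ᵐ[volume] g := by
    rw [Filter.EventuallyEq, ae_iff]
    exact hcnt.measure_zero _
  have hmeas : AEMeasurable Θ volume := (aux_g_meas hg).aemeasurable.congr haeeq.symm
  have hint : ∀ a b : ℝ, IntervalIntegrable Θ volume a b := aux_intInt hmeas hloc
  have h1 : ΘL t = min (gL t) (g t) :=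
    tendsto_nhds_unique (hΘL t) (aux_essInf_tendsto (hg t) (hgL t))
  have h2 : ΘU t = max (gL t) (g t) :=
    tendsto_nhds_unique (hΘU t) (aux_essSup_tendsto (hg t) (hgL t))
  ext ξ
  simp only [clarkeSubdiff, Set.mem_setOf_eq, Set.mem_Icc, h1, h2]
  constructor
  · intro h
    constructor
    · have := h (-1)
      rw [aux_clarke_neg hint (hg t) (hgL t) (by norm_num : (-1:ℝ) < 0)] at this
      linarith
    · have := h 1
      rw [aux_clarke_pos hint (hg t) (hgL t) one_pos] at this
      linarith
  · rintro ⟨hξ1, hξ2⟩ d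
    rcases lt_trichotomy d 0 with hd | rfl | hd
    · rw [aux_clarke_neg hint (hg t) (hgL t) hd]
      exact mul_le_mul_of_nonpos_right hξ1 hd.le
    · rw [aux_clarke_zero]
      simp
    · rw [aux_clarke_pos hint (hg t) (hgL t) hd]
      exact mul_le_mul_of_nonneg_right hξ2 hd.le
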